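/- Let A and B be symmetric positive definite d×d real matrices whose smallest eigenvalues are both at least C > 0. Then ‖A^{1/2} − B^{1/2}‖₂ ≤ ‖A − B‖₂ / (2√C), where ‖·‖₂ is the spectral (operator) norm and A^{1/2} is the positive definite square root of A. -/

import Mathlib

open Matrix
open scoped Matrix.Norms.L2Operator RealInnerProductSpace

section OldSqrt

open scoped ComplexOrder

/-- The square root of a positive semidefinite matrix, as defined in Mathlib of December 2024
(`Matrix.PosSemidef.sqrt`, since removed). -/
noncomputable def Matrix.PosSemidef.sqrt {n 𝕜 : Type*} [Fintype n] [DecidableEq n] [RCLike 𝕜]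
    {A : Matrix n n 𝕜} (hA : A.PosSemidef) : Matrix n n 𝕜 :=
  hA.1.eigenvectorUnitary.1 * diagonal ((↑) ∘ (Real.sqrt ∘ hA.1.eigenvalues)) *
    (star hA.1.eigenvectorUnitary : Matrix n n 𝕜)

end OldSqrt

lemma Matrix.PosSemidef.posSemidef_sqrt {n : Type*} [Fintype n] [DecidableEq n]
    {A : Matrix n n ℝ} (hA : A.PosSemidef) : hA.sqrt.PosSemidef := by
  unfold Matrix.PosSemidef.sqrt
  rw [star_eq_conjTranspose]
  exact (PosSemidef.diagonal (fun i => by simp [Real.sqrt_nonneg])).mul_mul_conjTranspose_same _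

lemma Matrix.PosSemidef.sqrt_mul_self {n : Type*} [Fintype n] [DecidableEq n]
    {A : Matrix n n ℝ} (hA : A.PosSemidef) : hA.sqrt * hA.sqrt = A := by
  unfold Matrix.PosSemidef.sqrt
  set U := hA.1.eigenvectorUnitary
  have hU : (star U : Matrix n n ℝ) * (U : Matrix n n ℝ) = 1 := Unitary.coe_star_mul_self U
  have hD : diagonal ((↑) ∘ (Real.sqrt ∘ hA.1.eigenvalues)) *
      diagonal ((↑) ∘ (Real.sqrt ∘ hA.1.eigenvalues)) =
      (diagonal (RCLike.ofReal ∘ hA.1.eigenvalues) : Matrix n n ℝ) := by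
    rw [diagonal_mul_diagonal]
    congr 1
    funext i
    simp [Real.mul_self_sqrt (hA.eigenvalues_nonneg i)]
  calc (U : Matrix n n ℝ) * diagonal ((↑) ∘ (Real.sqrt ∘ hA.1.eigenvalues)) * (star U : Matrix n n ℝ) *
        ((U : Matrix n n ℝ) * diagonal ((↑) ∘ (Real.sqrt ∘ hA.1.eigenvalues)) * (star U : Matrix n n ℝ))
      = (U : Matrix n n ℝ) * (diagonal ((↑) ∘ (Real.sqrt ∘ hA.1.eigenvalues)) *
        ((star U : Matrix n n ℝ) * (U : Matrix n n ℝ)) *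
        diagonal ((↑) ∘ (Real.sqrt ∘ hA.1.eigenvalues))) * (star U : Matrix n n ℝ) := by
        simp only [Matrix.mul_assoc]
    _ = A := by
        rw [hU, Matrix.mul_one, hD]
        conv_rhs => rw [hA.1.spectral_theorem, Unitary.conjStarAlgAut_apply]

namespace SqrtDiffAux

variable {n : Type*} [Fintype n] [DecidableEq n]

noncomputable def toE : (n → ℝ) → EuclideanSpace ℝ n := (WithLp.equiv 2 (n → ℝ)).symm

def ofE : EuclideanSpace ℝ n → (n → ℝ) := fun x i => x i

@[simp] lemma ofE_toE (w : n → ℝ) : ofE (toE w) = w := rfl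

lemma toE_smul (a : ℝ) (w : n → ℝ) : toE (a • w) = a • toE w := rfl

lemma toE_add (w₁ w₂ : n → ℝ) : toE (w₁ + w₂) = toE w₁ + toE w₂ := rfl

lemma inner_ofE (x y : EuclideanSpace ℝ n) : ⟪x, y⟫ = ofE x ⬝ᵥ ofE y := by
  simp [PiLp.inner_apply, dotProduct, ofE, mul_comm]

omit [DecidableEq n] in
lemma dot_symm {M : Matrix n n ℝ} (hM : M.IsHermitian) (x y : n → ℝ) :
    x ⬝ᵥ (M *ᵥ y) = (M *ᵥ x) ⬝ᵥ y := by
  rw [dotProduct_mulVec, ← Matrix.mulVec_transpose,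
    ← Matrix.conjTranspose_eq_transpose_of_trivial, hM.eq]

lemma repr_mulVec {M : Matrix n n ℝ} (hM : M.IsHermitian) (v : EuclideanSpace ℝ n) (i : n) :
    hM.eigenvectorBasis.repr (toE (M *ᵥ ofE v)) i
      = hM.eigenvalues i * hM.eigenvectorBasis.repr v i := by
  rw [OrthonormalBasis.repr_apply_apply, OrthonormalBasis.repr_apply_apply,
    inner_ofE, inner_ofE, ofE_toE, dot_symm hM]
  have h : M *ᵥ ofE (hM.eigenvectorBasis i) = hM.eigenvalues i • ofE (hM.eigenvectorBasis i) :=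
    hM.mulVec_eigenvectorBasis i
  rw [h, smul_dotProduct, smul_eq_mul]

lemma norm_sq_eq {M : Matrix n n ℝ} (hM : M.IsHermitian) (x : EuclideanSpace ℝ n) :
    ‖x‖ ^ 2 = ∑ i, (hM.eigenvectorBasis.repr x i) ^ 2 := by
  rw [← real_inner_self_eq_norm_sq, ← hM.eigenvectorBasis.repr.inner_map_map x x, inner_ofE]
  simp [dotProduct, ofE, sq]

lemma quad_lower {M : Matrix n n ℝ} (hM : M.IsHermitian) {c : ℝ}
    (hc : ∀ i, c ≤ hM.eigenvalues i) (v : EuclideanSpace ℝ n) :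
    c * ‖v‖ ^ 2 ≤ ⟪v, toE (M *ᵥ ofE v)⟫ := by
  have e1 : ⟪v, toE (M *ᵥ ofE v)⟫ = ∑ i, hM.eigenvalues i * (hM.eigenvectorBasis.repr v i) ^ 2 := by
    rw [← hM.eigenvectorBasis.repr.inner_map_map v (toE (M *ᵥ ofE v)), inner_ofE]
    simp only [dotProduct, ofE, repr_mulVec hM]
    exact Finset.sum_congr rfl fun i _ => by ring
  rw [e1, norm_sq_eq hM, Finset.mul_sum]
  exact Finset.sum_le_sum fun i _ =>
    mul_le_mul_of_nonneg_right (hc i) (sq_nonneg _)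

lemma norm_le_of_abs_eig_le {M : Matrix n n ℝ} (hM : M.IsHermitian) {m : ℝ} (hm0 : 0 ≤ m)
    (hm : ∀ i, |hM.eigenvalues i| ≤ m) : ‖M‖ ≤ m := by
  rw [Matrix.l2_opNorm_def]
  refine ContinuousLinearMap.opNorm_le_bound _ hm0 fun v => ?_
  have hv : (Matrix.toEuclideanLin.trans LinearMap.toContinuousLinearMap M) v
      = toE (M *ᵥ ofE v) := rfl
  rw [hv]
  have hsq : ‖toE (M *ᵥ ofE v)‖ ^ 2 ≤ (m * ‖v‖) ^ 2 := by
    rw [norm_sq_eq hM, mul_pow, norm_sq_eq hM v, Finset.mul_sum]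
    refine Finset.sum_le_sum fun i _ => ?_
    rw [repr_mulVec hM, mul_pow]
    refine mul_le_mul_of_nonneg_right ?_ (sq_nonneg _)
    calc hM.eigenvalues i ^ 2 = |hM.eigenvalues i| ^ 2 := (sq_abs _).symm
    _ ≤ m ^ 2 := pow_le_pow_left₀ (abs_nonneg _) (hm i) 2
  calc ‖toE (M *ᵥ ofE v)‖ = Real.sqrt (‖toE (M *ᵥ ofE v)‖ ^ 2) :=
        (Real.sqrt_sq (norm_nonneg _)).symm
  _ ≤ Real.sqrt ((m * ‖v‖) ^ 2) := Real.sqrt_le_sqrt hsq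
  _ = m * ‖v‖ := Real.sqrt_sq (by positivity)

lemma abs_inner_mulVec_le (M : Matrix n n ℝ) (v : EuclideanSpace ℝ n) (hv : ‖v‖ = 1) :
    |⟪v, toE (M *ᵥ ofE v)⟫| ≤ ‖M‖ := by
  calc |⟪v, toE (M *ᵥ ofE v)⟫| ≤ ‖v‖ * ‖toE (M *ᵥ ofE v)‖ := abs_real_inner_le_norm _ _
  _ = ‖toE (M *ᵥ ofE v)‖ := by rw [hv, one_mul]
  _ ≤ ‖M‖ * ‖v‖ := M.l2_opNorm_mulVec v
  _ = ‖M‖ := by rw [hv, mul_one]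

lemma sqrt_eig_lower {M : Matrix n n ℝ} (hM : M.PosDef) {c : ℝ} (hc : 0 ≤ c)
    (hMe : ∀ i, c ≤ hM.1.eigenvalues i) (i : n) :
    Real.sqrt c ≤ (hM.posSemidef.posSemidef_sqrt.1).eigenvalues i := by
  set S := hM.posSemidef.sqrt with hSdef
  have hS : S.PosSemidef := hM.posSemidef.posSemidef_sqrt
  set ν := hS.1.eigenvalues i with hνdef
  have hν0 : 0 ≤ ν := hS.eigenvalues_nonneg i
  set b := hS.1.eigenvectorBasis with hbdef
  have hvec : S *ᵥ ofE (b i) = ν • ofE (b i) := hS.1.mulVec_eigenvectorBasis i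
  have hAvec : M *ᵥ ofE (b i) = (ν ^ 2) • ofE (b i) := by
    have hMS : M = S * S := hM.posSemidef.sqrt_mul_self.symm
    rw [hMS, ← Matrix.mulVec_mulVec, hvec, Matrix.mulVec_smul, hvec, smul_smul, ← sq]
  have hb1 : ‖b i‖ = 1 := b.orthonormal.1 i
  have hquad := quad_lower hM.1 hMe (b i)
  rw [hAvec] at hquad
  have : ⟪b i, toE ((ν ^ 2) • ofE (b i))⟫ = ν ^ 2 := by
    rw [toE_smul, real_inner_smul_right]
    have : toE (ofE (b i)) = b i := rfl
    rw [this, real_inner_self_eq_norm_sq, hb1]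
    ring
  rw [this, hb1] at hquad
  have hcν : c ≤ ν ^ 2 := by linarith
  calc Real.sqrt c ≤ Real.sqrt (ν ^ 2) := Real.sqrt_le_sqrt hcν
  _ = ν := Real.sqrt_sq hν0

end SqrtDiffAux

open SqrtDiffAux

/-- For symmetric positive definite `A`, `B` with smallest eigenvalues at least `C > 0`,
`‖A^{1/2} - B^{1/2}‖₂ ≤ ‖A - B‖₂ / (2√C)`. -/
theorem stmt_1 (d : ℕ) (A B : Matrix (Fin d) (Fin d) ℝ)
    (hA : A.PosDef) (hB : B.PosDef) (C : ℝ) (hC : 0 < C)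
    (hAev : ∀ i, C ≤ hA.1.eigenvalues i) (hBev : ∀ i, C ≤ hB.1.eigenvalues i) :
    ‖hA.posSemidef.sqrt - hB.posSemidef.sqrt‖ ≤ ‖A - B‖ / (2 * Real.sqrt C) := by
  have hsC : 0 < Real.sqrt C := Real.sqrt_pos.mpr hC
  set SA := hA.posSemidef.sqrt with hSAdef
  set SB := hB.posSemidef.sqrt with hSBdef
  set X := SA - SB with hXdef
  have hXh : X.IsHermitian :=
    (hA.posSemidef.posSemidef_sqrt.1).sub (hB.posSemidef.posSemidef_sqrt.1)
  rcases Nat.eq_zero_or_pos d with rfl | hd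
  · have hX0 : X = 0 := Subsingleton.elim _ _
    rw [hX0, norm_zero]
    positivity
  haveI : Nonempty (Fin d) := ⟨⟨0, hd⟩⟩
  obtain ⟨i₀, hi₀⟩ := Finite.exists_max fun i => |hXh.eigenvalues i|
  set μ := hXh.eigenvalues i₀ with hμdef
  set v := hXh.eigenvectorBasis i₀ with hvdef
  have hv1 : ‖v‖ = 1 := hXh.eigenvectorBasis.orthonormal.1 i₀
  have hXv : X *ᵥ ofE v = μ • ofE v := hXh.mulVec_eigenvectorBasis i₀
  have hnormX : ‖X‖ ≤ |μ| := norm_le_of_abs_eig_le hXh (abs_nonneg μ) hi₀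
  set s₁ := ⟪v, toE (SA *ᵥ ofE v)⟫ with hs₁def
  set s₂ := ⟪v, toE (SB *ᵥ ofE v)⟫ with hs₂def
  have hs₁ : Real.sqrt C ≤ s₁ := by
    have := quad_lower (hA.posSemidef.posSemidef_sqrt.1)
      (sqrt_eig_lower hA hC.le hAev) v
    rwa [hv1, one_pow, mul_one] at this
  have hs₂ : Real.sqrt C ≤ s₂ := by
    have := quad_lower (hB.posSemidef.posSemidef_sqrt.1)
      (sqrt_eig_lower hB hC.le hBev) v
    rwa [hv1, one_pow, mul_one] at this
  have hAB : A - B = SA * X + X * SB := by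
    have h1 : SA * SA = A := hA.posSemidef.sqrt_mul_self
    have h2 : SB * SB = B := hB.posSemidef.sqrt_mul_self
    rw [hXdef, mul_sub, sub_mul, h1, h2]
    abel
  have hsymmX : ∀ x y : EuclideanSpace ℝ (Fin d),
      ⟪x, toE (X *ᵥ ofE y)⟫ = ⟪toE (X *ᵥ ofE x), y⟫ := by
    intro x y
    rw [inner_ofE, inner_ofE, ofE_toE, ofE_toE, dot_symm hXh]
  have key : ⟪v, toE ((A - B) *ᵥ ofE v)⟫ = μ * (s₁ + s₂) := by
    rw [hAB, Matrix.add_mulVec, toE_add, inner_add_right]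
    have t1 : ⟪v, toE ((SA * X) *ᵥ ofE v)⟫ = μ * s₁ := by
      rw [← Matrix.mulVec_mulVec, hXv, Matrix.mulVec_smul, toE_smul, real_inner_smul_right]
    have t2 : ⟪v, toE ((X * SB) *ᵥ ofE v)⟫ = μ * s₂ := by
      rw [← Matrix.mulVec_mulVec]
      have h0 : (SB *ᵥ ofE v) = ofE (toE (SB *ᵥ ofE v)) := rfl
      rw [h0, hsymmX v (toE (SB *ᵥ ofE v)), hXv, toE_smul, real_inner_smul_left]
      have h1 : toE (ofE v) = v := rfl
      rw [h1]
    rw [t1, t2]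
    ring
  have hsum0 : 0 ≤ s₁ + s₂ := by linarith
  have h2 : |μ| * (2 * Real.sqrt C) ≤ ‖A - B‖ := by
    calc |μ| * (2 * Real.sqrt C) ≤ |μ| * (s₁ + s₂) := by
          apply mul_le_mul_of_nonneg_left _ (abs_nonneg μ)
          linarith
    _ = |μ * (s₁ + s₂)| := by rw [abs_mul, abs_of_nonneg hsum0]
    _ = |⟪v, toE ((A - B) *ᵥ ofE v)⟫| := by rw [key]
    _ ≤ ‖A - B‖ := abs_inner_mulVec_le _ v hv1
  have h3 : |μ| ≤ ‖A - B‖ / (2 * Real.sqrt C) := by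
    rw [le_div_iff₀ (by positivity)]
    exact h2
  linarith
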